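/- Let λ = e^{2πiθ} with θ irrational (so λ² ≠ 1). The involutive automorphism σ of the noncommutative torus O(T²_θ) defined by σ(U) = U*, σ(V) = V* gives a ℤ₂-grading, and this grading is strong: the product of the degree-1 part with itself equals the degree-0 part, i.e., A₁·A₁ = A₀. -/

import Mathlib

/-- For `λ = e^{2πiθ}` with `λ² ≠ 1`, the `ℤ₂`-grading of the
noncommutative torus `O(T²_θ)` induced by the involutive automorphism `σ : U ↦ U*, V ↦ V*`
is strong: the product of the degree-one part with itself is the degree-zero part,
`A₁ · A₁ = A₀`. -/
theorem noncommutative_torus_strongly_graded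
    (A : Type*) [Ring A] [Algebra ℂ A] [StarRing A]
    (lam : ℂ) (hlam : ‖lam‖ = 1) (hlam2 : lam ^ 2 ≠ 1)
    (U V : A)
    (hU : U * star U = 1) (hU' : star U * U = 1)
    (hV : V * star V = 1) (hV' : star V * V = 1)
    (hUV : U * V = lam • (V * U))
    (hgen : Algebra.adjoin ℂ ({U, V, star U, star V} : Set A) = ⊤)
    (σ : A ≃ₐ[ℂ] A) (hσU : σ U = star U) (hσV : σ V = star V)
    (hσ2 : ∀ x, σ (σ x) = x)
    (A₀ A₁ : Submodule ℂ A)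
    (hA₀ : ∀ x, x ∈ A₀ ↔ σ x = x)
    (hA₁ : ∀ x, x ∈ A₁ ↔ σ x = -x) :
    A₁ * A₁ = A₀ := by
  have hlam0 : lam ≠ 0 := by
    intro h; rw [h] at hlam; simp at hlam
  -- conj lam = lam⁻¹
  have hconj : (starRingEnd ℂ) lam = lam⁻¹ := by
    apply eq_inv_of_mul_eq_one_right
    rw [Complex.mul_conj, Complex.normSq_eq_norm_sq, hlam]; norm_num
  -- cancellation lemmas
  have cU : ∀ w : A, U * (star U * w) = w := fun w => by rw [← mul_assoc, hU, one_mul]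
  have cU' : ∀ w : A, star U * (U * w) = w := fun w => by rw [← mul_assoc, hU', one_mul]
  have cV : ∀ w : A, V * (star V * w) = w := fun w => by rw [← mul_assoc, hV, one_mul]
  have cV' : ∀ w : A, star V * (V * w) = w := fun w => by rw [← mul_assoc, hV', one_mul]
  -- commutation relations
  have hVU : V * U = lam⁻¹ • (U * V) := by
    rw [hUV, smul_smul, inv_mul_cancel₀ hlam0, one_smul]
  have r2 : V * star U = lam • (star U * V) := by
    calc V * star U = star U * (U * (V * star U)) := (cU' _).symm
      _ = star U * ((U * V) * star U) := by rw [mul_assoc]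
      _ = star U * ((lam • (V * U)) * star U) := by rw [hUV]
      _ = lam • (star U * (V * (U * star U))) := by
          rw [smul_mul_assoc, mul_smul_comm, mul_assoc]
      _ = lam • (star U * V) := by rw [hU, mul_one]
  have r3 : star V * U = lam • (U * star V) := by
    calc star V * U = star V * (U * (V * star V)) := by rw [hV, mul_one]
      _ = star V * ((U * V) * star V) := by rw [mul_assoc]
      _ = star V * ((lam • (V * U)) * star V) := by rw [hUV]
      _ = lam • (star V * (V * (U * star V))) := by
          rw [smul_mul_assoc, mul_smul_comm, mul_assoc]
      _ = lam • (U * star V) := by rw [cV']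
  have r3' : U * star V = lam⁻¹ • (star V * U) := by
    rw [r3, smul_smul, inv_mul_cancel₀ hlam0, one_smul]
  have r4 : star V * star U = lam⁻¹ • (star U * star V) := by
    calc star V * star U = star U * (U * (star V * star U)) := (cU' _).symm
      _ = star U * ((U * star V) * star U) := by rw [mul_assoc]
      _ = star U * ((lam⁻¹ • (star V * U)) * star U) := by rw [r3']
      _ = lam⁻¹ • (star U * (star V * (U * star U))) := by
          rw [smul_mul_assoc, mul_smul_comm, mul_assoc]
      _ = lam⁻¹ • (star U * star V) := by rw [hU, mul_one]
  -- swap lemmas with trailing factor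
  have sVU : ∀ w : A, V * (U * w) = lam⁻¹ • (U * (V * w)) := fun w => by
    rw [← mul_assoc, hVU, smul_mul_assoc, mul_assoc]
  have sVU' : ∀ w : A, V * (star U * w) = lam • (star U * (V * w)) := fun w => by
    rw [← mul_assoc, r2, smul_mul_assoc, mul_assoc]
  have sV'U : ∀ w : A, star V * (U * w) = lam • (U * (star V * w)) := fun w => by
    rw [← mul_assoc, r3, smul_mul_assoc, mul_assoc]
  have sV'U' : ∀ w : A, star V * (star U * w) = lam⁻¹ • (star U * (star V * w)) := fun w => by
    rw [← mul_assoc, r4, smul_mul_assoc, mul_assoc]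
  -- sigma facts
  have hσU2 : σ (star U) = U := by rw [← hσU, hσ2]
  have hσV2 : σ (star V) = V := by rw [← hσV, hσ2]
  set x : A := U - star U with hxdef
  set y : A := V - star V with hydef
  set zh : A := U * star V - star U * V with hzhdef
  set z : A := U * star V + star U * V with hzdef
  have hσx : σ x = -x := by rw [hxdef, map_sub, hσU, hσU2]; abel
  have hσy : σ y = -y := by rw [hydef, map_sub, hσV, hσV2]; abel
  have hσzh : σ zh = -zh := by
    rw [hzhdef, map_sub, map_mul, map_mul, hσU, hσU2, hσV, hσV2]; abel
  have hσz : σ z = z := by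
    rw [hzdef, map_add, map_mul, map_mul, hσU, hσU2, hσV, hσV2]; abel
  have hσxz : σ (x * z) = -(x * z) := by rw [map_mul, hσx, hσz, neg_mul]
  -- the key algebraic identity
  have key : x * x + y * y - lam⁻¹ • (zh * zh) - (x * z) * y
      = (2 * (lam⁻¹ ^ 2 - 1) : ℂ) • (1 : A) := by
    simp only [hxdef, hydef, hzhdef, hzdef, sub_mul, mul_sub, add_mul, mul_add,
      mul_assoc, smul_mul_assoc, mul_smul_comm, smul_smul,
      cU, cU', cV, cV', sVU, sVU', sV'U, sV'U', hVU, r2, r3, r4,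
      hU, hU', hV, hV', mul_one, one_mul, smul_sub, smul_add]
    match_scalars <;> field_simp <;> ring
  have hc0 : (2 * (lam⁻¹ ^ 2 - 1) : ℂ) ≠ 0 := by
    have h2 : (lam⁻¹ : ℂ) ^ 2 ≠ 1 := by
      rw [inv_pow]
      intro h
      exact hlam2 (by rw [← inv_inv (lam ^ 2), h, inv_one])
    intro h
    rcases mul_eq_zero.1 h with h | h
    · norm_num at h
    · exact h2 (by linear_combination h)
  set c : ℂ := (2 * (lam⁻¹ ^ 2 - 1))⁻¹ with hcdef
  have hone : (1 : A) = c • (x * x + y * y - lam⁻¹ • (zh * zh) - (x * z) * y) := by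
    rw [key, smul_smul, hcdef, inv_mul_cancel₀ hc0, one_smul]
  apply le_antisymm
  · exact Submodule.mul_le.2 fun m hm n hn => (hA₀ _).2 (by
      rw [map_mul, (hA₁ m).1 hm, (hA₁ n).1 hn, neg_mul_neg])
  · intro a ha
    have haσ : σ a = a := (hA₀ a).1 ha
    have expand : a = c • ((a * x) * x + (a * y) * y
        - lam⁻¹ • ((a * zh) * zh) - (a * (x * z)) * y) := by
      conv_lhs => rw [← mul_one a, hone]
      rw [mul_smul_comm, mul_sub, mul_sub, mul_add, mul_smul_comm,
        ← mul_assoc, ← mul_assoc, ← mul_assoc, ← mul_assoc]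
    have m1 : a * x ∈ A₁ := (hA₁ _).2 (by rw [map_mul, haσ, hσx, mul_neg])
    have m2 : a * y ∈ A₁ := (hA₁ _).2 (by rw [map_mul, haσ, hσy, mul_neg])
    have m3 : a * zh ∈ A₁ := (hA₁ _).2 (by rw [map_mul, haσ, hσzh, mul_neg])
    have m4 : a * (x * z) ∈ A₁ := (hA₁ _).2 (by rw [map_mul, haσ, hσxz, mul_neg])
    have mx : x ∈ A₁ := (hA₁ _).2 hσx
    have my : y ∈ A₁ := (hA₁ _).2 hσy
    have mzh : zh ∈ A₁ := (hA₁ _).2 hσzh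
    rw [expand]
    exact Submodule.smul_mem _ _ (sub_mem (sub_mem
      (add_mem (Submodule.mul_mem_mul m1 mx) (Submodule.mul_mem_mul m2 my))
      (Submodule.smul_mem _ _ (Submodule.mul_mem_mul m3 mzh)))
      (Submodule.mul_mem_mul m4 my))
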